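/- Let B be a symmetric d-multilinear form on 𝔽_p^n with d < p, and let Q(x₁,…,x_k) = Σ_{u∈U^d} c_u B(x_{u₁},…,x_{u_d}) be a linear combination over nondecreasing tuples u = (u₁≤…≤u_d) ∈ [k]^d with not all c_u zero. Then there exist a₁,…,a_k ∈ 𝔽_p and nonzero α ∈ 𝔽_p such that Q(a₁w,…,a_kw) = α·B(w,…,w) for every w ∈ 𝔽_p^n. -/

import Mathlib

private theorem ofFn_multiset_aux {k : ℕ} : ∀ {d : ℕ} (w : Fin d → Fin k),
    (∑ j, ({w j} : Multiset (Fin k))) = (List.ofFn w : Multiset (Fin k)) := by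
  intro d
  induction d with
  | zero => intro w; simp
  | succ m ih =>
    intro w
    rw [Fin.sum_univ_succ, List.ofFn_succ, ih]
    rfl

private theorem monotone_inj_aux {d k : ℕ} (u v : Fin d → Fin k) (hu : Monotone u)
    (hv : Monotone v)
    (h : (∑ j, Finsupp.single (u j) 1 : Fin k →₀ ℕ) = ∑ j, Finsupp.single (v j) 1) :
    u = v := by
  have h2 : (List.ofFn u : Multiset (Fin k)) = (List.ofFn v : Multiset (Fin k)) := by
    have := congrArg Finsupp.toMultiset h
    simpa [ofFn_multiset_aux u, ofFn_multiset_aux v] using this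
  have hperm : (List.ofFn u).Perm (List.ofFn v) := Multiset.coe_eq_coe.mp h2
  exact List.ofFn_injective (List.Perm.eq_of_sortedLE hu.sortedLE_ofFn hv.sortedLE_ofFn hperm)

private theorem exists_nonvanishing_aux {p k d : ℕ} [Fact p.Prime] (hd : d < p)
    (c : (Fin d → Fin k) → ZMod p)
    (hmono : ∀ u, c u ≠ 0 → Monotone u)
    (hne : ∃ u, c u ≠ 0) :
    ∃ a : Fin k → ZMod p, (∑ u : Fin d → Fin k, c u * ∏ j, a (u j)) ≠ 0 := by
  classical
  set E : (Fin d → Fin k) → (Fin k →₀ ℕ) := fun u => ∑ j, Finsupp.single (u j) 1 with hE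
  set P : MvPolynomial (Fin k) (ZMod p) :=
    ∑ u : Fin d → Fin k, MvPolynomial.monomial (E u) (c u) with hP
  obtain ⟨u₀, hu₀⟩ := hne
  have hcoeff : MvPolynomial.coeff (E u₀) P = c u₀ := by
    rw [hP, MvPolynomial.coeff_sum]
    rw [Finset.sum_eq_single u₀]
    · simp [MvPolynomial.coeff_monomial]
    · intro u _ hu
      rw [MvPolynomial.coeff_monomial]
      by_cases hc : c u = 0
      · simp [hc]
      · rw [if_neg]
        intro hEe
        exact hu (monotone_inj_aux u u₀ (hmono u hc) (hmono u₀ hu₀) hEe)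
    · simp
  have hPne : P ≠ 0 := fun h => hu₀ (by rw [← hcoeff, h, MvPolynomial.coeff_zero])
  have hmem : P ∈ MvPolynomial.restrictDegree (Fin k) (ZMod p) (Fintype.card (ZMod p) - 1) := by
    rw [hP]
    apply Submodule.sum_mem
    intro u _
    rw [MvPolynomial.mem_restrictDegree]
    intro s hs i
    have hsE : s = E u := by
      have := MvPolynomial.support_monomial_subset hs
      simpa using this
    subst hsE
    have h1 : (E u) i ≤ d := by
      rw [hE]
      simp only [Finsupp.coe_finset_sum, Finset.sum_apply]
      calc (∑ j, Finsupp.single (u j) 1 i) ≤ ∑ _j : Fin d, 1 := by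
            apply Finset.sum_le_sum
            intro j _
            rw [Finsupp.single_apply]
            split <;> simp
        _ = d := by simp
    have h2 : Fintype.card (ZMod p) = p := ZMod.card p
    omega
  have : ¬ ∀ v : Fin k → ZMod p, MvPolynomial.eval v P = 0 := by
    intro h
    exact hPne (MvPolynomial.eq_zero_of_eval_eq_zero (K := ZMod p) (σ := Fin k) P h hmem)
  push_neg at this
  obtain ⟨a, ha⟩ := this
  refine ⟨a, ?_⟩
  convert ha using 2
  rw [hP, map_sum]
  apply Finset.sum_congr rfl
  intro u _
  rw [MvPolynomial.eval_monomial]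
  rw [hE]
  congr 1
  rw [← Finsupp.prod_finset_sum_index (fun i => pow_zero (a i))
    (fun i e₁ e₂ => pow_add (a i) e₁ e₂)]
  simp [Finsupp.prod_single_index]

/-- Let `B` be a symmetric `d`-multilinear form on `V = 𝔽_p^n` with `d < p`, and let
`Q(x₁,…,x_k) = ∑_{u ∈ U^d} c_u · B(x_{u₁},…,x_{u_d})` be a linear combination over
nondecreasing tuples `u ∈ [k]^d` with not all coefficients zero. Then there are
`a₁,…,a_k ∈ 𝔽_p` and `α ≠ 0` with `Q(a₁w,…,a_kw) = α·B(w,…,w)` for all `w`. -/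
theorem exists_diagonal_substitution {p n k d : ℕ} [Fact p.Prime] (hd : d < p)
    (B : MultilinearMap (ZMod p) (fun _ : Fin d => (Fin n → ZMod p)) (ZMod p))
    (hsymm : ∀ (σ : Equiv.Perm (Fin d)) (v : Fin d → Fin n → ZMod p),
      B (v ∘ σ) = B v)
    (c : (Fin d → Fin k) → ZMod p)
    (hmono : ∀ u, c u ≠ 0 → Monotone u)
    (hne : ∃ u, c u ≠ 0) :
    ∃ (a : Fin k → ZMod p) (α : ZMod p), α ≠ 0 ∧
      ∀ w : Fin n → ZMod p,
        (∑ u : Fin d → Fin k, c u * B (fun j => a (u j) • w)) =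
          α * B (fun _ => w) := by
  obtain ⟨a, ha⟩ := exists_nonvanishing_aux hd c hmono hne
  refine ⟨a, ∑ u : Fin d → Fin k, c u * ∏ j, a (u j), ha, fun w => ?_⟩
  rw [Finset.sum_mul]
  apply Finset.sum_congr rfl
  intro u _
  have := B.map_smul_univ (fun j => a (u j)) (fun _ => w)
  rw [this, smul_eq_mul, mul_assoc]
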